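/- In the Hecke algebra H_{n,q}, the element x_n := ([n]_q!)⁻¹ · Σ_{w ∈ S_n} T_w is an idempotent, provided [n]_q! is invertible in K. -/

import Mathlib

/-- The Coxeter length of a permutation of `Fin n` (its number of inversions). -/
def permLen {n : ℕ} (w : Equiv.Perm (Fin n)) : ℕ :=
  (Finset.univ.filter fun p : Fin n × Fin n => p.1 < p.2 ∧ w p.2 < w p.1).card

/-- q-integer `[m]_q = 1 + q + ⋯ + q^{m-1}`. -/
def qnat {K : Type*} [Semiring K] (q : K) (m : ℕ) : K := ∑ i ∈ Finset.range m, q ^ i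

/-- q-factorial `[m]_q! = [1]_q [2]_q ⋯ [m]_q`. -/
def qfact {K : Type*} [CommSemiring K] (q : K) (m : ℕ) : K :=
  ∏ i ∈ Finset.range m, qnat q (i + 1)

open Finset Equiv

lemma swap_val {n : ℕ} (i j a : Fin n) :
    ((Equiv.swap i j) a : ℕ) = if (a:ℕ) = i then j else if (a:ℕ) = j then i else a := by
  rcases eq_or_ne a i with rfl|hai
  · simp [Equiv.swap_apply_left]
  · rcases eq_or_ne a j with rfl|haj
    · simp [Equiv.swap_apply_right, (Fin.val_ne_iff).2 hai]
    · rw [Equiv.swap_apply_of_ne_of_ne hai haj,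
        if_neg ((Fin.val_ne_iff).2 hai), if_neg ((Fin.val_ne_iff).2 haj)]

lemma swap_lt {n : ℕ} {i j : Fin n} (hij : (i:ℕ) + 1 = j) {a b : Fin n}
    (hab : a < b) (hne : ¬(a = i ∧ b = j)) : Equiv.swap i j a < Equiv.swap i j b := by
  have hne' : ¬((a:ℕ) = i ∧ (b:ℕ) = j) := by simpa [Fin.ext_iff] using hne
  rw [Fin.lt_def] at hab ⊢
  rw [swap_val, swap_val]
  split_ifs <;> omega

lemma permLen_mul_swap {n : ℕ} (w : Equiv.Perm (Fin n)) {i j : Fin n} (hij : (i:ℕ) + 1 = j)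
    (h : w i < w j) : permLen (w * Equiv.swap i j) = permLen w + 1 := by
  classical
  set s := Equiv.swap i j with hs
  have hijlt : i < j := by rw [Fin.lt_def]; omega
  have key : (Finset.univ.filter fun p : Fin n × Fin n =>
        p.1 < p.2 ∧ (w * s) p.2 < (w * s) p.1)
      = insert (i, j) ((Finset.univ.filter fun p : Fin n × Fin n =>
        p.1 < p.2 ∧ w p.2 < w p.1).image fun p => (s p.1, s p.2)) := by
    ext p
    rw [Finset.mem_filter]
    simp only [Finset.mem_insert, Finset.mem_image, Finset.mem_filter, Finset.mem_univ,
      true_and, Equiv.Perm.mul_apply]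
    constructor
    · rintro ⟨h1, h2⟩
      by_cases hp : p = (i, j)
      · exact Or.inl hp
      · refine Or.inr ⟨(s p.1, s p.2), ⟨?_, ?_⟩, ?_⟩
        · apply swap_lt hij h1
          rintro ⟨e1, e2⟩
          exact hp (Prod.ext e1 e2)
        · simpa [hs, Equiv.swap_apply_self] using h2
        · simp [hs, Equiv.swap_apply_self]
    · rintro (rfl|⟨a, ⟨⟨ha1, ha2⟩, rfl⟩⟩)
      · refine ⟨hijlt, ?_⟩
        simpa [hs] using h
      · refine ⟨?_, ?_⟩
        · apply swap_lt hij ha1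
          rintro ⟨rfl, rfl⟩
          exact absurd h (not_lt.2 ha2.le)
        · simpa [hs, Equiv.swap_apply_self] using ha2
  have hnotmem : (i, j) ∉ ((Finset.univ.filter fun p : Fin n × Fin n =>
        p.1 < p.2 ∧ w p.2 < w p.1).image fun p => (s p.1, s p.2)) := by
    simp only [Finset.mem_image, Finset.mem_filter, Finset.mem_univ, true_and, Prod.ext_iff]
    rintro ⟨a, ⟨ha1, ha2⟩, e1, e2⟩
    have e1' : a.1 = j := by
      have := congrArg s e1; simpa [hs, Equiv.swap_apply_self] using this
    have e2' : a.2 = i := by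
      have := congrArg s e2; simpa [hs, Equiv.swap_apply_self] using this
    rw [Fin.lt_def, e1', e2'] at ha1
    omega
  have hinj : Function.Injective (fun p : Fin n × Fin n => (s p.1, s p.2)) := by
    intro a b hab
    simp only [Prod.ext_iff] at hab ⊢
    exact ⟨s.injective hab.1, s.injective hab.2⟩
  rw [permLen, permLen, key, Finset.card_insert_of_notMem hnotmem,
    Finset.card_image_of_injective _ hinj]

lemma permLen_swap_of_gt {n : ℕ} (w : Equiv.Perm (Fin n)) {i j : Fin n} (hij : (i:ℕ) + 1 = j)
    (h : w j < w i) : permLen w = permLen (w * Equiv.swap i j) + 1 := by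
  have hu : (w * Equiv.swap i j) i < (w * Equiv.swap i j) j := by
    simpa [Equiv.Perm.mul_apply] using h
  have := permLen_mul_swap (w * Equiv.swap i j) hij hu
  rwa [mul_assoc, Equiv.swap_mul_self, mul_one] at this

lemma permLen_one {n : ℕ} : permLen (1 : Equiv.Perm (Fin n)) = 0 := by
  rw [permLen, Finset.card_eq_zero, Finset.filter_eq_empty_iff]
  rintro p -
  rintro ⟨h1, h2⟩
  simp only [Equiv.Perm.one_apply] at h2
  exact absurd h2 (not_lt.2 h1.le)

lemma exists_descent {n : ℕ} (w : Equiv.Perm (Fin n)) (hw : w ≠ 1) :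
    ∃ i j : Fin n, (i:ℕ) + 1 = j ∧ w j < w i := by
  by_contra hcon
  push_neg at hcon
  have hadj : ∀ i j : Fin n, (i:ℕ) + 1 = j → w i < w j := by
    intro i j hij
    have hne : w i ≠ w j := fun e => by
      have : i = j := w.injective e
      rw [this] at hij; omega
    exact lt_of_le_of_ne (hcon i j hij) hne
  have step : ∀ d (a b : Fin n), (b:ℕ) = (a:ℕ) + d + 1 → w a < w b := by
    intro d
    induction d with
    | zero => intro a b hb; exact hadj a b (by omega)
    | succ d ih =>
      intro a b hb
      have hcn : (a:ℕ) + d + 1 < n := by have := b.isLt; omega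
      set c : Fin n := ⟨(a:ℕ) + d + 1, hcn⟩ with hc
      exact lt_trans (ih a c rfl) (hadj c b (by simp [hc]; omega))
  have hmono : StrictMono ⇑w := by
    intro a b hab
    rw [Fin.lt_def] at hab
    exact step ((b:ℕ) - (a:ℕ) - 1) a b (by omega)
  have hid : ⇑w = id := by
    haveI : WellFoundedLT (Fin n) := inferInstance
    have h2 : StrictMono (id : Fin n → Fin n) := strictMono_id
    refine (hmono.range_inj h2).1 ?_
    rw [Set.range_eq_univ.2 w.surjective]
    simp
  exact hw (Equiv.ext fun x => congrFun hid x)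

lemma succAbove_val {n : ℕ} (k : Fin (n+1)) (v : Fin n) :
    ((k.succAbove v : Fin (n+1)) : ℕ) = if (v:ℕ) < (k:ℕ) then (v:ℕ) else (v:ℕ)+1 := by
  simp only [Fin.succAbove, Fin.lt_def, Fin.coe_castSucc]
  split_ifs <;> simp

def mkPerm {n : ℕ} (k : Fin (n+1)) (e : Equiv.Perm (Fin n)) : Equiv.Perm (Fin (n+1)) :=
  (finSuccEquiv n).trans ((Equiv.optionCongr e).trans (finSuccEquiv' k).symm)

@[simp] lemma mkPerm_zero {n : ℕ} (k : Fin (n+1)) (e : Equiv.Perm (Fin n)) :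
    mkPerm k e 0 = k := by
  simp [mkPerm, Equiv.trans_apply]

@[simp] lemma mkPerm_succ {n : ℕ} (k : Fin (n+1)) (e : Equiv.Perm (Fin n)) (i : Fin n) :
    mkPerm k e i.succ = k.succAbove (e i) := by
  simp [mkPerm, Equiv.trans_apply]

lemma card_filter_val_lt {m K : ℕ} (h : K ≤ m) :
    ((Finset.univ : Finset (Fin m)).filter fun x : Fin m => (x:ℕ) < K).card = K := by
  classical
  have : ((Finset.univ : Finset (Fin m)).filter fun x : Fin m => (x:ℕ) < K)
      = Finset.map (Fin.castLEEmb h) Finset.univ := by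
    ext x
    simp only [Finset.mem_filter, Finset.mem_univ, true_and, Finset.mem_map]
    constructor
    · intro hx; exact ⟨⟨(x:ℕ), hx⟩, by simp [Fin.castLEEmb, Fin.ext_iff]⟩
    · rintro ⟨y, rfl⟩; simpa [Fin.castLEEmb] using y.isLt
  rw [this, Finset.card_map, Finset.card_univ, Fintype.card_fin]

lemma permLen_mkPerm {n : ℕ} (k : Fin (n+1)) (e : Equiv.Perm (Fin n)) :
    permLen (mkPerm k e) = (k:ℕ) + permLen e := by
  classical
  set A := ((Finset.univ.filter fun p : Fin n × Fin n => p.1 < p.2 ∧ e p.2 < e p.1).image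
          fun p => (p.1.succ, p.2.succ)) with hA
  set B := ((Finset.univ.filter fun i : Fin n => (e i : ℕ) < (k:ℕ)).image
          fun i => ((0 : Fin (n+1)), i.succ)) with hB
  have key : (Finset.univ.filter fun p : Fin (n+1) × Fin (n+1) =>
        p.1 < p.2 ∧ mkPerm k e p.2 < mkPerm k e p.1) = A ∪ B := by
    ext ⟨x, y⟩
    simp only [hA, hB, Finset.mem_union, Finset.mem_image, Finset.mem_filter, Finset.mem_univ,
      true_and, Prod.ext_iff]
    induction x using Fin.cases with
    | zero =>
      induction y using Fin.cases with
      | zero =>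
        constructor
        · rintro ⟨h1, -⟩; exact absurd h1 (lt_irrefl _)
        · rintro (⟨p, -, hp, -⟩|⟨i, -, -, hi⟩)
          · exact absurd hp (Fin.succ_ne_zero _)
          · exact absurd hi (Fin.succ_ne_zero _)
      | succ b =>
        constructor
        · rintro ⟨-, h2⟩
          refine Or.inr ⟨b, ?_, rfl, rfl⟩
          rw [mkPerm_zero, mkPerm_succ, Fin.lt_def, succAbove_val] at h2
          split_ifs at h2 <;> omega
        · rintro (⟨p, -, hp, -⟩|⟨i, hi, -, h2⟩)
          · exact absurd hp (Fin.succ_ne_zero _)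
          · have hb : e b = e i := by
              have : b = i := Fin.succ_injective _ h2.symm
              rw [this]
            refine ⟨Fin.succ_pos _, ?_⟩
            rw [mkPerm_zero, mkPerm_succ, Fin.lt_def, succAbove_val, hb]
            split_ifs <;> omega
    | succ a =>
      induction y using Fin.cases with
      | zero =>
        constructor
        · rintro ⟨h1, -⟩
          exact absurd h1 (by simp)
        · rintro (⟨p, -, -, hp⟩|⟨i, -, hi, -⟩)
          · exact absurd hp (Fin.succ_ne_zero _)
          · exact absurd hi.symm (Fin.succ_ne_zero _)
      | succ b =>
        constructor
        · rintro ⟨h1, h2⟩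
          refine Or.inl ⟨(a, b), ⟨?_, ?_⟩, rfl, rfl⟩
          · exact Fin.succ_lt_succ_iff.1 h1
          · rw [mkPerm_succ, mkPerm_succ] at h2
            exact (Fin.succAbove_lt_succAbove_iff).1 h2
        · rintro (⟨p, ⟨hp1, hp2⟩, h1, h2⟩|⟨i, -, h1, -⟩)
          · have ha : p.1 = a := Fin.succ_injective _ h1
            have hb : p.2 = b := Fin.succ_injective _ h2
            rw [ha, hb] at hp1 hp2
            refine ⟨Fin.succ_lt_succ_iff.2 hp1, ?_⟩
            rw [mkPerm_succ, mkPerm_succ]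
            exact (Fin.succAbove_lt_succAbove_iff).2 hp2
          · exact absurd h1.symm (Fin.succ_ne_zero _)
  have hdisj : Disjoint A B := by
    rw [Finset.disjoint_left]
    rintro p hp hq
    simp only [hA, hB, Finset.mem_image, Finset.mem_filter, Finset.mem_univ, true_and,
      Prod.ext_iff] at hp hq
    obtain ⟨u, -, hu1, -⟩ := hp
    obtain ⟨v, -, hv1, -⟩ := hq
    rw [← hv1] at hu1
    exact Fin.succ_ne_zero _ hu1
  have hcardA : A.card = permLen e := by
    rw [hA, Finset.card_image_of_injective, permLen]
    intro p1 p2 h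
    simp only [Prod.ext_iff] at h ⊢
    exact ⟨Fin.succ_injective _ h.1, Fin.succ_injective _ h.2⟩
  have hcardB : B.card = (k:ℕ) := by
    rw [hB, Finset.card_image_of_injective]
    · have : ((Finset.univ : Finset (Fin n)).filter fun i : Fin n => (e i : ℕ) < (k:ℕ)).card
          = ((Finset.univ : Finset (Fin n)).filter fun x : Fin n => (x:ℕ) < (k:ℕ)).card := by
        apply Finset.card_bij (fun i _ => e i)
        · intro a ha; simp only [Finset.mem_filter, Finset.mem_univ, true_and] at ha ⊢; exact ha
        · intro a _ b _ hab; exact e.injective hab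
        · intro b hb
          simp only [Finset.mem_filter, Finset.mem_univ, true_and] at hb ⊢
          exact ⟨e.symm b, by simpa using hb, by simp⟩
      rw [this, card_filter_val_lt (by omega : (k:ℕ) ≤ n)]
    · intro a b hab
      simp only [Prod.ext_iff] at hab
      exact Fin.succ_injective _ hab.2
  rw [permLen, key, Finset.card_union_of_disjoint hdisj, hcardA, hcardB]
  omega

lemma sum_q_permLen {K : Type*} [CommSemiring K] (q : K) (n : ℕ) :
    ∑ w : Equiv.Perm (Fin n), q ^ permLen w = qfact q n := by
  induction n with
  | zero =>
    have h1 : ∀ w : Equiv.Perm (Fin 0), q ^ permLen w = 1 := fun w => by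
      rw [Subsingleton.elim w 1, permLen_one, pow_zero]
    rw [Finset.sum_congr rfl (fun w _ => h1 w), Finset.sum_const, Finset.card_univ,
      Fintype.card_perm]
    simp [qfact]
  | succ n ih =>
    have hinj : Function.Injective
        (fun p : Fin (n+1) × Equiv.Perm (Fin n) => mkPerm p.1 p.2) := by
      rintro ⟨k, e⟩ ⟨k', e'⟩ h
      have h0 : k = k' := by
        have := DFunLike.congr_fun h (0 : Fin (n+1))
        simpa using this
      subst h0
      have he : e = e' := by
        ext i
        have := DFunLike.congr_fun h i.succ
        simp only [mkPerm_succ] at this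
        exact congrArg Fin.val (Fin.succAbove_right_injective this)
      rw [he]
    have hcard : Fintype.card (Fin (n+1) × Equiv.Perm (Fin n))
        = Fintype.card (Equiv.Perm (Fin (n+1))) := by
      simp [Fintype.card_perm, Nat.factorial_succ]
    have hbij : Function.Bijective
        (fun p : Fin (n+1) × Equiv.Perm (Fin n) => mkPerm p.1 p.2) :=
      (Fintype.bijective_iff_injective_and_card _).2 ⟨hinj, hcard⟩
    have hsum := Fintype.sum_bijective _ hbij
      (fun p : Fin (n+1) × Equiv.Perm (Fin n) => q ^ ((p.1 : ℕ) + permLen p.2))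
      (fun w : Equiv.Perm (Fin (n+1)) => q ^ permLen w)
      (fun p => by
        show q ^ ((p.1 : ℕ) + permLen p.2) = q ^ permLen (mkPerm p.1 p.2)
        rw [permLen_mkPerm])
    rw [← hsum, Fintype.sum_prod_type]
    have : ∀ k : Fin (n+1), ∑ e : Equiv.Perm (Fin n), q ^ ((k:ℕ) + permLen e)
        = q ^ (k:ℕ) * qfact q n := by
      intro k
      rw [← ih, Finset.mul_sum]
      exact Finset.sum_congr rfl fun e _ => pow_add q _ _
    rw [Finset.sum_congr rfl (fun k _ => this k), ← Finset.sum_mul]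
    have hq : ∑ k : Fin (n+1), q ^ (k:ℕ) = qnat q (n+1) := by
      rw [qnat, Fin.sum_univ_eq_sum_range]
    rw [hq, show qfact q (n+1) = qfact q n * qnat q (n+1) from Finset.prod_range_succ _ _,
      mul_comm]

section Main
variable {K : Type*} [Field K] {q : K} {n : ℕ}
variable {A : Type*} [Ring A] [Algebra K A]

theorem sum_mul_swap (T : Equiv.Perm (Fin n) → A)
    (hmul : ∀ (w : Equiv.Perm (Fin n)) (i j : Fin n), (i : ℕ) + 1 = j →
      T w * T (Equiv.swap i j) =
        if permLen (w * Equiv.swap i j) = permLen w + 1 then T (w * Equiv.swap i j)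
        else (q - 1) • T w + q • T (w * Equiv.swap i j))
    (i j : Fin n) (hij : (i:ℕ) + 1 = j) :
    (∑ w : Equiv.Perm (Fin n), T w) * T (Equiv.swap i j)
      = q • ∑ w : Equiv.Perm (Fin n), T w := by
  classical
  set s := Equiv.swap i j with hs
  set F : Equiv.Perm (Fin n) → A := fun w =>
    if permLen (w * s) = permLen w + 1 then T (w * s)
    else (q - 1) • T w + q • T (w * s) with hF
  have hijne : i ≠ j := by intro h; rw [h] at hij; omega
  rw [Finset.sum_mul, Finset.sum_congr rfl (fun w _ => hmul w i j hij)]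
  have hsplit := Finset.sum_filter_add_sum_filter_not Finset.univ
    (fun w : Equiv.Perm (Fin n) => w i < w j) F
  have hcompl : ∀ w : Equiv.Perm (Fin n), ¬ (w i < w j) ↔ w j < w i := by
    intro w
    have : w i ≠ w j := fun h => hijne (w.injective h)
    constructor
    · intro h; exact lt_of_le_of_ne (not_lt.1 h) (Ne.symm this)
    · intro h; exact not_lt.2 h.le
  -- the "up" set
  set U := Finset.univ.filter (fun w : Equiv.Perm (Fin n) => w i < w j) with hU
  set D := Finset.univ.filter (fun w : Equiv.Perm (Fin n) => ¬ w i < w j) with hD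
  have hmem : ∀ w ∈ U, w * s ∈ D := by
    intro w hw
    simp only [hU, hD, Finset.mem_filter, Finset.mem_univ, true_and] at hw ⊢
    rw [hcompl]
    simpa [hs, Equiv.Perm.mul_apply] using hw
  have hmem' : ∀ w ∈ D, w * s ∈ U := by
    intro w hw
    simp only [hU, hD, Finset.mem_filter, Finset.mem_univ, true_and] at hw ⊢
    rw [hcompl] at hw
    simpa [hs, Equiv.Perm.mul_apply] using hw
  have hss : ∀ w : Equiv.Perm (Fin n), w * s * s = w := fun w => by
    rw [mul_assoc, hs, Equiv.swap_mul_self, mul_one]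
  -- reindex the D-sum by U
  have hDsum : ∀ (G : Equiv.Perm (Fin n) → A), ∑ w ∈ D, G w = ∑ w ∈ U, G (w * s) := by
    intro G
    exact Finset.sum_nbij' (fun w => w * s) (fun w => w * s) (fun a ha => hmem' a ha)
      (fun a ha => hmem a ha) (fun a _ => hss a) (fun a _ => hss a)
      (fun a _ => (congrArg G (hss a)).symm)
  have hFU : ∀ w ∈ U, F w = T (w * s) := by
    intro w hw
    simp only [hU, Finset.mem_filter, Finset.mem_univ, true_and] at hw
    rw [hF]
    simp only []
    rw [if_pos (permLen_mul_swap w hij hw)]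
  have hFD : ∀ w ∈ U, F (w * s) = (q - 1) • T (w * s) + q • T w := by
    intro w hw
    simp only [hU, Finset.mem_filter, Finset.mem_univ, true_and] at hw
    have hlen : permLen (w * s) = permLen w + 1 := permLen_mul_swap w hij hw
    have hcond : ¬ (permLen (w * s * s) = permLen (w * s) + 1) := by
      rw [hss]; omega
    rw [hF]
    simp only []
    rw [if_neg hcond, hss]
  calc ∑ w : Equiv.Perm (Fin n), F w
      = ∑ w ∈ U, F w + ∑ w ∈ D, F w := hsplit.symm
    _ = ∑ w ∈ U, T (w * s) + ∑ w ∈ U, F (w * s) := by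
        rw [Finset.sum_congr rfl hFU, hDsum]
    _ = ∑ w ∈ U, (T (w * s) + ((q - 1) • T (w * s) + q • T w)) := by
        rw [← Finset.sum_add_distrib]
        exact Finset.sum_congr rfl fun w hw => by rw [hFD w hw]
    _ = ∑ w ∈ U, (q • T (w * s) + q • T w) := by
        refine Finset.sum_congr rfl fun w hw => ?_
        have : T (w * s) + (q - 1) • T (w * s) = q • T (w * s) := by
          rw [sub_smul, one_smul]; abel
        rw [← add_assoc, this]
    _ = q • (∑ w ∈ U, T (w * s) + ∑ w ∈ U, T w) := by
        rw [Finset.sum_add_distrib, smul_add, Finset.smul_sum, Finset.smul_sum]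
    _ = q • (∑ w ∈ D, T w + ∑ w ∈ U, T w) := by rw [hDsum]
    _ = q • ∑ w : Equiv.Perm (Fin n), T w := by
        rw [add_comm, Finset.sum_filter_add_sum_filter_not]

theorem sum_mul_T (T : Equiv.Perm (Fin n) → A)
    (hone : T 1 = 1)
    (hmul : ∀ (w : Equiv.Perm (Fin n)) (i j : Fin n), (i : ℕ) + 1 = j →
      T w * T (Equiv.swap i j) =
        if permLen (w * Equiv.swap i j) = permLen w + 1 then T (w * Equiv.swap i j)
        else (q - 1) • T w + q • T (w * Equiv.swap i j))
    (w : Equiv.Perm (Fin n)) :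
    (∑ u : Equiv.Perm (Fin n), T u) * T w
      = q ^ permLen w • ∑ u : Equiv.Perm (Fin n), T u := by
  classical
  set S := ∑ u : Equiv.Perm (Fin n), T u with hS
  suffices h : ∀ m, ∀ w : Equiv.Perm (Fin n), permLen w = m
      → S * T w = q ^ permLen w • S by exact h _ w rfl
  intro m
  induction m using Nat.strong_induction_on with
  | _ m IH =>
    intro w hw
    by_cases h1 : w = 1
    · subst h1
      rw [hone, mul_one, permLen_one, pow_zero, one_smul]
    · obtain ⟨i, j, hij, hd⟩ := exists_descent w h1
      set s := Equiv.swap i j with hs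
      have hu : (w * s) i < (w * s) j := by
        simpa [hs, Equiv.Perm.mul_apply] using hd
      have hlen := permLen_mul_swap (w * s) hij hu
      have hws : w * s * s = w := by rw [mul_assoc, hs, Equiv.swap_mul_self, mul_one]
      have hmm := hmul (w * s) i j hij
      rw [← hs] at hmm
      rw [hws] at hlen hmm
      rw [if_pos hlen] at hmm
      have ihws := IH (permLen (w * s)) (by omega) (w * s) rfl
      calc S * T w = S * (T (w * s) * T s) := by rw [hmm]
        _ = (S * T (w * s)) * T s := by rw [mul_assoc]
        _ = (q ^ permLen (w * s) • S) * T s := by rw [ihws]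
        _ = q ^ permLen (w * s) • (S * T s) := by rw [smul_mul_assoc]
        _ = q ^ permLen (w * s) • (q • S) := by rw [sum_mul_swap T hmul i j hij]
        _ = q ^ permLen w • S := by
            rw [smul_smul, hlen, pow_succ]

end Main

/-- in the Hecke algebra `H_{n,q}` — modelled as an algebra `A` with a
basis `{T_w : w ∈ S_n}` satisfying `T_1 = 1` and the usual multiplication rule
`T_w T_{s_i} = T_{w s_i}` if `ℓ(w s_i) = ℓ(w)+1`, and `T_w T_{s_i} = (q-1) T_w + q T_{w s_i}`
otherwise — the element `x_n = ([n]_q!)⁻¹ Σ_w T_w` is an idempotent,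
provided `[n]_q!` is invertible. -/
theorem stmt_2 {K : Type*} [Field K] (q : K) (n : ℕ)
    {A : Type*} [Ring A] [Algebra K A]
    (T : Equiv.Perm (Fin n) → A)
    (hbasis : LinearIndependent K T)
    (hone : T 1 = 1)
    (hmul : ∀ (w : Equiv.Perm (Fin n)) (i j : Fin n), (i : ℕ) + 1 = j →
      T w * T (Equiv.swap i j) =
        if permLen (w * Equiv.swap i j) = permLen w + 1 then T (w * Equiv.swap i j)
        else (q - 1) • T w + q • T (w * Equiv.swap i j))
    (hfact : qfact q n ≠ 0) :
    ((qfact q n)⁻¹ • ∑ w : Equiv.Perm (Fin n), T w) *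
        ((qfact q n)⁻¹ • ∑ w : Equiv.Perm (Fin n), T w) =
      (qfact q n)⁻¹ • ∑ w : Equiv.Perm (Fin n), T w := by
  classical
  set S := ∑ w : Equiv.Perm (Fin n), T w with hS
  have hSS : S * S = qfact q n • S := by
    calc S * S = ∑ w : Equiv.Perm (Fin n), S * T w := by rw [hS, Finset.mul_sum]
      _ = ∑ w : Equiv.Perm (Fin n), q ^ permLen w • S := by
          exact Finset.sum_congr rfl fun w _ => sum_mul_T T hone hmul w
      _ = (∑ w : Equiv.Perm (Fin n), q ^ permLen w) • S := by
          rw [Finset.sum_smul]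
      _ = qfact q n • S := by rw [sum_q_permLen]
  rw [smul_mul_assoc, mul_smul_comm, smul_smul, hSS, smul_smul]
  congr 1
  field_simp
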